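/- Let f : ℝⁿ × ℝᵐ → ℝ be twice continuously differentiable, α > 0, and let (x*,y*) be a critical point of f. Let J_GDA = I + αH(x*,y*) be the Jacobian of the GDA map at (x*,y*), and let J_OGDA be the Jacobian of the OGDA map at (x*,y*,x*,y*). Then for every complex number λ with λ ≠ 1/2, λ is an eigenvalue of J_OGDA if and only if (λ² + λ - 1)/(2λ - 1) is an eigenvalue of J_GDA. In particular, 1/2 is never an eigenvalue of J_OGDA, and if 1 + r is an eigenvalue of J_GDA then every complex root of λ² - (1 + 2r)λ + r = 0 is an eigenvalue of J_OGDA. -/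
import Mathlib


open Filter Topology MeasureTheory Matrix

noncomputable section

abbrev Euc (n : ℕ) : Type := EuclideanSpace ℝ (Fin n)

/-- Partial gradient of `f` with respect to the first (`x`) variable. -/
noncomputable def gradX {n m : ℕ} (f : Euc n × Euc m → ℝ) (p : Euc n × Euc m) : Euc n :=
  gradient (fun x => f (x, p.2)) p.1

/-- Partial gradient of `f` with respect to the second (`y`) variable. -/
noncomputable def gradY {n m : ℕ} (f : Euc n × Euc m → ℝ) (p : Euc n × Euc m) : Euc m :=
  gradient (fun y => f (p.1, y)) p.2

/-- The GDA (gradient descent/ascent) update map with step size `α`: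
`h(x,y) = (x - α ∇ₓ f(x,y), y + α ∇ᵧ f(x,y))`. -/
noncomputable def gda {n m : ℕ} (f : Euc n × Euc m → ℝ) (α : ℝ) (p : Euc n × Euc m) :
    Euc n × Euc m :=
  (p.1 - α • gradX f p, p.2 + α • gradY f p)

/-- The standard basis vectors of `ℝⁿ × ℝᵐ`. -/
noncomputable def bVec (n m : ℕ) : Fin n ⊕ Fin m → Euc n × Euc m
  | Sum.inl i => (EuclideanSpace.single i 1, 0)
  | Sum.inr j => (0, EuclideanSpace.single j 1)

/-- Second directional derivative of `f` at `p` in directions `u, v`. -/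
noncomputable def dD {n m : ℕ} (f : Euc n × Euc m → ℝ) (p u v : Euc n × Euc m) : ℝ :=
  fderiv ℝ (fun q => fderiv ℝ f q v) p u

/-- The matrix `H = [[-∇²ₓₓ f, -∇²ₓᵧ f], [∇²ᵧₓ f, ∇²ᵧᵧ f]]` of `f` at `p`. -/
noncomputable def Hmat {n m : ℕ} (f : Euc n × Euc m → ℝ) (p : Euc n × Euc m) :
    Matrix (Fin n ⊕ Fin m) (Fin n ⊕ Fin m) ℝ :=
  Matrix.of fun i j =>
    (Sum.elim (fun _ => (-1 : ℝ)) (fun _ => (1 : ℝ)) i) * dD f p (bVec n m i) (bVec n m j)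

/-- The set of complex eigenvalues of a real square matrix. -/
noncomputable def specC {ι : Type} [Fintype ι] [DecidableEq ι] (M : Matrix ι ι ℝ) : Set ℂ :=
  spectrum ℂ (M.map (Complex.ofReal))

/-- The Jacobian `I + αH` of the GDA update map at `p`. -/
noncomputable def Jgda {n m : ℕ} (f : Euc n × Euc m → ℝ) (α : ℝ) (p : Euc n × Euc m) :
    Matrix (Fin n ⊕ Fin m) (Fin n ⊕ Fin m) ℝ :=
  1 + α • Hmat f p

/-- The OGDA (optimistic gradient descent/ascent) update map with step size `α`,
acting on pairs `((x_t, y_t), (x_{t-1}, y_{t-1}))`. -/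
noncomputable def ogda {n m : ℕ} (f : Euc n × Euc m → ℝ) (α : ℝ)
    (q : (Euc n × Euc m) × (Euc n × Euc m)) : (Euc n × Euc m) × (Euc n × Euc m) :=
  ((q.1.1 - (2 * α) • gradX f q.1 + α • gradX f q.2,
    q.1.2 + (2 * α) • gradY f q.1 - α • gradY f q.2), q.1)

/-- The full Hessian matrix `∇²f` of `f` at `p`. -/
noncomputable def hessMat {n m : ℕ} (f : Euc n × Euc m → ℝ) (p : Euc n × Euc m) :
    Matrix (Fin n ⊕ Fin m) (Fin n ⊕ Fin m) ℝ :=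
  Matrix.of fun i j => dD f p (bVec n m i) (bVec n m j)

/-- The Jacobian of the OGDA update map at a fixed point `(p, p)`, in block form
`[[I + 2αH, -αH], [I, 0]]` where `H = H(p)`. -/
noncomputable def Jogda {n m : ℕ} (f : Euc n × Euc m → ℝ) (α : ℝ) (p : Euc n × Euc m) :
    Matrix ((Fin n ⊕ Fin m) ⊕ (Fin n ⊕ Fin m)) ((Fin n ⊕ Fin m) ⊕ (Fin n ⊕ Fin m)) ℝ :=
  Matrix.fromBlocks (1 + (2 * α) • Hmat f p) ((-α) • Hmat f p) 1 0

section Aux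

variable {ι : Type} [Fintype ι] [DecidableEq ι]

lemma spec_iff_exists (M : Matrix ι ι ℂ) (μ : ℂ) :
    μ ∈ spectrum ℂ M ↔ ∃ v, v ≠ 0 ∧ M *ᵥ v = μ • v := by
  rw [spectrum.mem_iff, Algebra.algebraMap_eq_smul_one]
  rw [Matrix.isUnit_iff_isUnit_det, isUnit_iff_ne_zero, not_not,
    ← Matrix.exists_mulVec_eq_zero_iff]
  constructor
  · rintro ⟨v, hv, h⟩
    refine ⟨v, hv, ?_⟩
    rw [Matrix.sub_mulVec, Matrix.smul_mulVec, Matrix.one_mulVec, sub_eq_zero] at h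
    exact h.symm
  · rintro ⟨v, hv, h⟩
    refine ⟨v, hv, ?_⟩
    rw [Matrix.sub_mulVec, Matrix.smul_mulVec, Matrix.one_mulVec, sub_eq_zero, h]

lemma ogda_block_spec (A : Matrix ι ι ℂ) (lam : ℂ) :
    lam ∈ spectrum ℂ (Matrix.fromBlocks ((2:ℂ) • A - 1) (1 - A) 1 0 : Matrix (ι ⊕ ι) (ι ⊕ ι) ℂ) ↔
      ∃ v, v ≠ 0 ∧ (2 * lam - 1) • (A *ᵥ v) = (lam ^ 2 + lam - 1) • v := by
  rw [spec_iff_exists (Matrix.fromBlocks ((2:ℂ) • A - 1) (1 - A) 1 0) lam]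
  constructor
  · rintro ⟨w, hw, h⟩
    set u : ι → ℂ := fun i => w (Sum.inl i) with hu
    set v : ι → ℂ := fun i => w (Sum.inr i) with hv
    have hw' : w = Sum.elim u v := by funext x; cases x <;> rfl
    rw [Matrix.fromBlocks_mulVec] at h
    have h1 : ((2:ℂ) • A - 1) *ᵥ (w ∘ Sum.inl) + (1 - A) *ᵥ (w ∘ Sum.inr) = lam • u := by
      funext i; exact congrFun h (Sum.inl i)
    have h2 : (1 : Matrix ι ι ℂ) *ᵥ (w ∘ Sum.inl) + (0 : Matrix ι ι ℂ) *ᵥ (w ∘ Sum.inr)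
        = lam • v := by
      funext i; exact congrFun h (Sum.inr i)
    have hcl : w ∘ Sum.inl = u := rfl
    have hcr : w ∘ Sum.inr = v := rfl
    rw [hcl, hcr, Matrix.one_mulVec, Matrix.zero_mulVec, add_zero] at h2
    rw [hcl, hcr] at h1
    have hvne : v ≠ 0 := by
      intro hv0
      apply hw
      have hu0 : u = 0 := by rw [h2, hv0, smul_zero]
      rw [hw', hu0, hv0]
      funext x; cases x <;> rfl
    refine ⟨v, hvne, ?_⟩
    rw [h2] at h1
    rw [Matrix.sub_mulVec, Matrix.sub_mulVec, Matrix.smul_mulVec,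
      Matrix.one_mulVec, Matrix.one_mulVec, Matrix.mulVec_smul] at h1
    have := h1
    linear_combination (norm := module) this
  · rintro ⟨v, hvne, hrel⟩
    refine ⟨Sum.elim (lam • v) v, ?_, ?_⟩
    · intro h0
      apply hvne
      funext i; exact congrFun h0 (Sum.inr i)
    · rw [Matrix.fromBlocks_mulVec]
      have hcl : Sum.elim (lam • v) v ∘ Sum.inl = lam • v := rfl
      have hcr : Sum.elim (lam • v) v ∘ Sum.inr = v := rfl
      rw [hcl, hcr]
      have e1 : ((2:ℂ) • A - 1) *ᵥ (lam • v) + (1 - A) *ᵥ v = lam • (lam • v) := by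
        rw [Matrix.sub_mulVec, Matrix.sub_mulVec, Matrix.smul_mulVec,
          Matrix.one_mulVec, Matrix.one_mulVec, Matrix.mulVec_smul]
        linear_combination (norm := module) hrel
      have e2 : (1 : Matrix ι ι ℂ) *ᵥ (lam • v) + (0 : Matrix ι ι ℂ) *ᵥ v = lam • v := by
        rw [Matrix.one_mulVec, Matrix.zero_mulVec, add_zero]
      rw [e1, e2]
      funext x; cases x <;> rfl

end Aux

lemma jogda_map_eq {n m : ℕ} (f : Euc n × Euc m → ℝ) (α : ℝ) (p : Euc n × Euc m) :
    (Jogda f α p).map Complex.ofReal =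
      Matrix.fromBlocks ((2:ℂ) • ((Jgda f α p).map Complex.ofReal) - 1)
        (1 - (Jgda f α p).map Complex.ofReal) 1 0 := by
  ext i j
  rcases i with i | i <;> rcases j with j | j <;>
    simp [Jogda, Jgda, Matrix.fromBlocks, Matrix.one_apply, Matrix.map_apply,
      apply_ite Complex.ofReal] <;>
    split_ifs <;> push_cast <;> ring


/-- Let `(x*,y*)` be a critical point of a twice continuously
differentiable `f` and `α > 0`.  With `J_GDA = I + αH(x*,y*)` and `J_OGDA` the OGDA
Jacobian at `(x*,y*,x*,y*)`: for every `λ ≠ 1/2`, `λ` is an eigenvalue of `J_OGDA`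
iff `(λ² + λ - 1)/(2λ - 1)` is an eigenvalue of `J_GDA`; moreover `1/2` is never an
eigenvalue of `J_OGDA`, and if `1 + r` is an eigenvalue of `J_GDA` then every root of
`λ² - (1 + 2r)λ + r = 0` is an eigenvalue of `J_OGDA`. -/
theorem ogda_gda_eigenvalue_correspondence {n m : ℕ} (f : Euc n × Euc m → ℝ) (α : ℝ)
    (hα : 0 < α) (hf : ContDiff ℝ 2 f)
    (pstar : Euc n × Euc m) (hcrit : fderiv ℝ f pstar = 0) :
    (∀ lam : ℂ, lam ≠ 1 / 2 →
      (lam ∈ specC (Jogda f α pstar) ↔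
        (lam ^ 2 + lam - 1) / (2 * lam - 1) ∈ specC (Jgda f α pstar))) ∧
    (1 / 2 : ℂ) ∉ specC (Jogda f α pstar) ∧
    (∀ r : ℂ, (1 + r) ∈ specC (Jgda f α pstar) →
      ∀ lam : ℂ, lam ^ 2 - (1 + 2 * r) * lam + r = 0 → lam ∈ specC (Jogda f α pstar)) := by
  set A : Matrix (Fin n ⊕ Fin m) (Fin n ⊕ Fin m) ℂ := (Jgda f α pstar).map Complex.ofReal with hA
  have hog : ∀ lam : ℂ, lam ∈ specC (Jogda f α pstar) ↔
      ∃ v, v ≠ 0 ∧ (2 * lam - 1) • (A *ᵥ v) = (lam ^ 2 + lam - 1) • v := by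
    intro lam
    rw [specC, jogda_map_eq, ogda_block_spec]
  have hgd : ∀ μ : ℂ, μ ∈ specC (Jgda f α pstar) ↔ ∃ v, v ≠ 0 ∧ A *ᵥ v = μ • v := fun μ =>
    spec_iff_exists A μ
  refine ⟨?_, ?_, ?_⟩
  · intro lam hlam
    have h2l : 2 * lam - 1 ≠ 0 := by
      intro h; exact hlam (by linear_combination h / 2)
    rw [hog, hgd]
    constructor
    · rintro ⟨v, hv, h⟩
      refine ⟨v, hv, ?_⟩
      rw [div_eq_inv_mul, mul_smul, ← h, smul_smul, inv_mul_cancel₀ h2l, one_smul]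
    · rintro ⟨v, hv, h⟩
      refine ⟨v, hv, ?_⟩
      rw [h, smul_smul, mul_div_cancel₀ _ h2l]
  · rw [hog]
    rintro ⟨v, hv, h⟩
    apply hv
    have : (2 * (1/2 : ℂ) - 1) = 0 := by norm_num
    rw [this, zero_smul] at h
    have hc : ((1/2 : ℂ) ^ 2 + 1/2 - 1) = -(1/4) := by norm_num
    rw [hc] at h
    have := h.symm
    rwa [smul_eq_zero, or_iff_right (by norm_num : (-(1/4) : ℂ) ≠ 0)] at this
  · intro r hr lam hlam
    rw [hgd] at hr
    obtain ⟨v, hv, h⟩ := hr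
    rw [hog]
    refine ⟨v, hv, ?_⟩
    rw [h, smul_smul]
    congr 1
    linear_combination -hlam
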